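/- Let Z = Σ_{i=1}^n z_i with independent z_i ~ Ber(q_i), λ = Σ q_i, and ℓ ≥ λ an integer. Then min(λ, ℓ) - E[min(Z, ℓ)] = Σ_{i=ℓ+1}^n P[Z ≥ i], and for any α ∈ (0,1), this quantity is at most αλ + (6/α)·exp(-α²λ/3). -/

import Mathlib

open Finset Real

/-- Probability of the outcome `z` of `n` independent Bernoulli random variables with
parameters `q i`. -/
noncomputable def berWeight {n : ℕ} (q : Fin n → ℝ) (z : Fin n → Bool) : ℝ :=
  ∏ i, if z i then q i else 1 - q i

/-- Number of successes in outcome `z`. -/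
def count {n : ℕ} (z : Fin n → Bool) : ℕ := ∑ i, if z i then 1 else 0

/-- `Hber q ℓ = E[min(Σᵢ zᵢ, ℓ)]` for independent `zᵢ ~ Ber(q i)`. -/
noncomputable def Hber {n : ℕ} (q : Fin n → ℝ) (ℓ : ℕ) : ℝ :=
  ∑ z : Fin n → Bool, berWeight q z * min ((count z : ℝ)) (ℓ : ℝ)

/-- `Ptail q m = P[Σᵢ zᵢ ≥ m]` for independent `zᵢ ~ Ber(q i)`. -/
noncomputable def Ptail {n : ℕ} (q : Fin n → ℝ) (m : ℕ) : ℝ :=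
  ∑ z ∈ Finset.univ.filter (fun z : Fin n → Bool => m ≤ count z), berWeight q z

lemma sum_prod_bool : ∀ {n : ℕ} (f : Fin n → Bool → ℝ),
    ∑ z : Fin n → Bool, ∏ i, f i (z i) = ∏ i, (f i false + f i true) := by
  intro n
  induction n with
  | zero => intro f; simp
  | succ n ih =>
    intro f
    calc ∑ z : Fin (n+1) → Bool, ∏ i, f i (z i)
        = ∑ p : Bool × (Fin n → Bool), (f 0 p.1 * ∏ i : Fin n, f i.succ (p.2 i)) := by
          apply Fintype.sum_equiv (Fin.consEquiv (fun _ => Bool)).symm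
          intro z
          rw [Fin.prod_univ_succ]
          rfl
      _ = (f 0 false + f 0 true) * ∏ i : Fin n, (f i.succ false + f i.succ true) := by
          rw [Fintype.sum_prod_type]
          simp only [← Finset.mul_sum, Fintype.sum_bool, ih (fun i b => f i.succ b)]
          ring
      _ = ∏ i, (f i false + f i true) := by rw [Fin.prod_univ_succ]

lemma exp_prod {n : ℕ} (q : Fin n → ℝ) (g : Fin n → Bool → ℝ) :
    ∑ z : Fin n → Bool, berWeight q z * ∏ i, g i (z i)
      = ∏ i, ((1 - q i) * g i false + q i * g i true) := by
  have h : ∀ z : Fin n → Bool, berWeight q z * ∏ i, g i (z i)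
      = ∏ i, ((if z i then q i else 1 - q i) * g i (z i)) := by
    intro z; rw [berWeight, ← Finset.prod_mul_distrib]
  simp_rw [h]
  rw [sum_prod_bool (fun i b => (if b then q i else 1 - q i) * g i b)]
  simp

lemma berWeight_nonneg {n : ℕ} {q : Fin n → ℝ} (hq : ∀ i, q i ∈ Set.Icc (0:ℝ) 1)
    (z : Fin n → Bool) : 0 ≤ berWeight q z := by
  apply Finset.prod_nonneg
  intro i _
  rcases (hq i) with ⟨h0, h1⟩
  split <;> linarith

lemma sum_berWeight {n : ℕ} (q : Fin n → ℝ) :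
    ∑ z : Fin n → Bool, berWeight q z = 1 := by
  have := exp_prod q (fun _ _ => 1)
  simpa using this

lemma count_cast {n : ℕ} (z : Fin n → Bool) :
    (count z : ℝ) = ∑ i, (if z i then (1:ℝ) else 0) := by
  rw [count]; push_cast; simp

lemma sum_berWeight_ind {n : ℕ} (q : Fin n → ℝ) (i : Fin n) :
    ∑ z : Fin n → Bool, berWeight q z * (if z i then (1:ℝ) else 0) = q i := by
  have := exp_prod q (fun j b => if j = i then (if b then (1:ℝ) else 0) else 1)
  simp only at this
  calc ∑ z : Fin n → Bool, berWeight q z * (if z i then (1:ℝ) else 0)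
      = ∑ z : Fin n → Bool, berWeight q z *
          ∏ j, (if j = i then (if z j then (1:ℝ) else 0) else 1) := by
        apply Finset.sum_congr rfl; intro z _
        congr 1
        rw [Finset.prod_eq_single i (fun b _ hb => by simp [hb]) (by simp)]
        simp
    _ = ∏ j, ((1 - q j) * (if j = i then (0:ℝ) else 1) + q j * (if j = i then 1 else 1)) := by
        rw [this]; apply Finset.prod_congr rfl; intro j _; by_cases h : j = i <;> simp [h]
    _ = q i := by
        rw [Finset.prod_eq_single i] <;> intros <;> simp_all

lemma mean_count {n : ℕ} (q : Fin n → ℝ) :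
    ∑ z : Fin n → Bool, berWeight q z * (count z : ℝ) = ∑ i, q i := by
  simp_rw [count_cast, Finset.mul_sum]
  rw [Finset.sum_comm]
  exact Finset.sum_congr rfl fun i _ => sum_berWeight_ind q i

lemma mgf {n : ℕ} (q : Fin n → ℝ) (t : ℝ) :
    ∑ z : Fin n → Bool, berWeight q z * Real.exp (t * (count z : ℝ))
      = ∏ i, (1 - q i + q i * Real.exp t) := by
  have h : ∀ z : Fin n → Bool, Real.exp (t * (count z : ℝ))
      = ∏ i, (if z i then Real.exp t else 1) := by
    intro z
    rw [count_cast, Finset.mul_sum, Real.exp_sum]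
    apply Finset.prod_congr rfl; intro i _; split <;> simp
  simp_rw [h]
  rw [exp_prod q (fun i b => if b then Real.exp t else 1)]
  simp

lemma ptail_nonneg {n : ℕ} {q : Fin n → ℝ} (hq : ∀ i, q i ∈ Set.Icc (0:ℝ) 1) (m : ℕ) :
    0 ≤ Ptail q m :=
  Finset.sum_nonneg fun z _ => berWeight_nonneg hq z

lemma ptail_le_one {n : ℕ} {q : Fin n → ℝ} (hq : ∀ i, q i ∈ Set.Icc (0:ℝ) 1) (m : ℕ) :
    Ptail q m ≤ 1 := by
  rw [← sum_berWeight q, Ptail]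
  exact Finset.sum_le_sum_of_subset_of_nonneg (Finset.filter_subset _ _)
    (fun z _ _ => berWeight_nonneg hq z)

lemma ptail_le_chernoff {n : ℕ} {q : Fin n → ℝ} (hq : ∀ i, q i ∈ Set.Icc (0:ℝ) 1)
    (m : ℕ) {t : ℝ} (ht : 0 ≤ t) :
    Ptail q m ≤ Real.exp ((Real.exp t - 1) * (∑ i, q i) - t * m) := by
  have h1 : Ptail q m ≤ ∑ z : Fin n → Bool, berWeight q z * Real.exp (t * (count z : ℝ) - t * m) := by
    rw [Ptail]
    calc ∑ z ∈ Finset.univ.filter (fun z : Fin n → Bool => m ≤ count z), berWeight q z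
        ≤ ∑ z ∈ Finset.univ.filter (fun z : Fin n → Bool => m ≤ count z),
            berWeight q z * Real.exp (t * (count z : ℝ) - t * m) := by
          apply Finset.sum_le_sum
          intro z hz
          have hm : (m : ℝ) ≤ (count z : ℝ) := by
            exact_mod_cast (Finset.mem_filter.mp hz).2
          have : (1:ℝ) ≤ Real.exp (t * (count z : ℝ) - t * m) := by
            rw [← Real.exp_zero]
            apply Real.exp_le_exp.mpr
            nlinarith
          nlinarith [berWeight_nonneg hq z]
      _ ≤ ∑ z : Fin n → Bool, berWeight q z * Real.exp (t * (count z : ℝ) - t * m) := by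
          apply Finset.sum_le_sum_of_subset_of_nonneg (Finset.filter_subset _ _)
          intro z _ _
          exact mul_nonneg (berWeight_nonneg hq z) (Real.exp_nonneg _)
  have h2 : ∑ z : Fin n → Bool, berWeight q z * Real.exp (t * (count z : ℝ) - t * m)
      = Real.exp (-(t * m)) * ∑ z : Fin n → Bool, berWeight q z * Real.exp (t * (count z : ℝ)) := by
    rw [Finset.mul_sum]
    apply Finset.sum_congr rfl
    intro z _
    rw [sub_eq_add_neg, add_comm, Real.exp_add]
    ring
  have h3 : ∏ i, (1 - q i + q i * Real.exp t) ≤ Real.exp ((Real.exp t - 1) * (∑ i, q i)) := by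
    have : ∀ i : Fin n, 1 - q i + q i * Real.exp t ≤ Real.exp (q i * (Real.exp t - 1)) := by
      intro i
      have := Real.add_one_le_exp (q i * (Real.exp t - 1))
      linarith
    calc ∏ i, (1 - q i + q i * Real.exp t) ≤ ∏ i, Real.exp (q i * (Real.exp t - 1)) := by
          apply Finset.prod_le_prod
          · intro i _
            rcases hq i with ⟨h0, h1⟩
            have het : (1:ℝ) ≤ Real.exp t := by
              rw [← Real.exp_zero]; exact Real.exp_le_exp.mpr ht
            nlinarith
          · intro i _; exact this i
      _ = Real.exp ((Real.exp t - 1) * (∑ i, q i)) := by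
          rw [← Real.exp_sum, ← Finset.sum_mul, mul_comm]
  calc Ptail q m ≤ Real.exp (-(t * m)) * ∑ z : Fin n → Bool, berWeight q z * Real.exp (t * (count z : ℝ)) := by
        rw [← h2]; exact h1
    _ ≤ Real.exp (-(t * m)) * Real.exp ((Real.exp t - 1) * (∑ i, q i)) := by
        apply mul_le_mul_of_nonneg_left _ (Real.exp_nonneg _)
        rw [mgf]; exact h3
    _ = Real.exp ((Real.exp t - 1) * (∑ i, q i) - t * m) := by
        rw [← Real.exp_add]; ring_nf

lemma count_le {n : ℕ} (z : Fin n → Bool) : count z ≤ n := by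
  rw [count]
  calc (∑ i : Fin n, if z i then 1 else 0) ≤ ∑ _i : Fin n, 1 :=
        Finset.sum_le_sum (fun i _ => by split <;> omega)
    _ = n := by simp

lemma tail_identity {n : ℕ} (q : Fin n → ℝ) (ℓ : ℕ) :
    ∑ i ∈ Finset.Icc (ℓ + 1) n, Ptail q i
      = ∑ z : Fin n → Bool, berWeight q z * ((count z : ℝ) - min ((count z : ℝ)) (ℓ : ℝ)) := by
  have h1 : ∀ i, Ptail q i = ∑ z : Fin n → Bool, (if i ≤ count z then berWeight q z else 0) := by
    intro i; rw [Ptail, Finset.sum_filter]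
  simp_rw [h1]
  rw [Finset.sum_comm]
  apply Finset.sum_congr rfl
  intro z _
  have hcn := count_le z
  have hfilter : (Finset.Icc (ℓ + 1) n).filter (fun i => i ≤ count z)
      = Finset.Icc (ℓ + 1) (count z) := by
    ext i
    simp only [Finset.mem_filter, Finset.mem_Icc]
    omega
  calc ∑ i ∈ Finset.Icc (ℓ + 1) n, (if i ≤ count z then berWeight q z else 0)
      = ∑ i ∈ (Finset.Icc (ℓ + 1) n).filter (fun i => i ≤ count z), berWeight q z := by
        rw [Finset.sum_filter]
    _ = ((count z - ℓ : ℕ) : ℝ) * berWeight q z := by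
        rw [Finset.sum_const, hfilter, Nat.card_Icc]
        have : count z + 1 - (ℓ + 1) = count z - ℓ := by omega
        rw [this, nsmul_eq_mul]
    _ = berWeight q z * ((count z : ℝ) - min ((count z : ℝ)) (ℓ : ℝ)) := by
        rcases le_total (count z) ℓ with h | h
        · rw [Nat.sub_eq_zero_of_le h, min_eq_left (by exact_mod_cast h)]
          simp
        · rw [min_eq_right (by exact_mod_cast h), Nat.cast_sub h]
          ring

lemma exp_quad {t : ℝ} (h0 : 0 ≤ t) (h1 : t ≤ 1) :
    Real.exp t ≤ 1 + t + (3/4) * t^2 := by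
  have := Real.exp_bound' h0 h1 (n := 2) (by norm_num)
  simp [Finset.sum_range_succ, Nat.factorial] at this
  nlinarith

lemma one_sub_exp_neg {t : ℝ} (h0 : 0 < t) (h1 : t ≤ 1) :
    t/2 ≤ 1 - Real.exp (-t) := by
  have h := Real.add_one_le_exp t
  have he : 0 < Real.exp t := Real.exp_pos t
  have : Real.exp (-t) = 1 / Real.exp t := by rw [Real.exp_neg]; ring
  have h2 : 1 / Real.exp t ≤ 1 - t/2 := by
    rw [div_le_iff₀ he]; nlinarith
  rw [this]; linarith

lemma geomSumLe {r : ℝ} (h0 : 0 ≤ r) (h1 : r < 1) (K : ℕ) :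
    ∑ j ∈ Finset.range K, r^j ≤ 1/(1-r) := by
  have hr : 0 < 1 - r := by linarith
  rw [le_div_iff₀ hr]
  have hg := geom_sum_mul r K
  have hp : 0 ≤ r ^ K := pow_nonneg h0 K
  nlinarith


/-- Let `Z = Σ z_i` with independent `z_i ~ Ber(q_i)`, `λ = Σ q_i`, and `ℓ ≥ λ` a positive
integer. Then `min(λ, ℓ) - E[min(Z, ℓ)] = Σ_{i=ℓ+1}^n P[Z ≥ i]`, and for any `α ∈ (0,1)`
this quantity is at most `αλ + (6/α)·exp(-α²λ/3)`. -/
theorem chernoff_upper_tail (n : ℕ) (q : Fin n → ℝ) (hq : ∀ i, q i ∈ Set.Icc (0 : ℝ) 1)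
    (lam : ℝ) (hlam : lam = ∑ i, q i) (ℓ : ℕ) (hℓ : 1 ≤ ℓ) (hℓlam : lam ≤ (ℓ : ℝ)) :
    min lam (ℓ : ℝ) - Hber q ℓ = ∑ i ∈ Finset.Icc (ℓ + 1) n, Ptail q i ∧
    ∀ α : ℝ, 0 < α → α < 1 →
      min lam (ℓ : ℝ) - Hber q ℓ ≤ α * lam + 6 / α * Real.exp (-(α ^ 2 * lam / 3)) := by
  have hlam0 : 0 ≤ lam := by
    rw [hlam]; exact Finset.sum_nonneg fun i _ => (hq i).1
  have hmin : min lam (ℓ : ℝ) = lam := min_eq_left hℓlam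
  have hid : min lam (ℓ : ℝ) - Hber q ℓ = ∑ i ∈ Finset.Icc (ℓ + 1) n, Ptail q i := by
    rw [hmin, tail_identity, Hber]
    rw [hlam, ← mean_count q, ← Finset.sum_sub_distrib]
    apply Finset.sum_congr rfl
    intro z _
    ring
  refine ⟨hid, ?_⟩
  intro α hα0 hα1
  rw [hid]
  set t : ℝ := 2*α/3 with ht_def
  have ht0 : 0 < t := by positivity
  have ht1 : t ≤ 1 := by rw [ht_def]; linarith
  set c : ℝ := Real.exp (-(α ^ 2 * lam / 3)) with hc_def
  have hc0 : 0 < c := Real.exp_pos _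
  set S := Finset.Icc (ℓ + 1) n with hS
  set P : ℕ → Prop := fun i => (i:ℝ) < (1+α)*lam with hP
  have hsplit := Finset.sum_filter_add_sum_filter_not S P (fun i => Ptail q i)
  rw [← hsplit]
  have hb1 : ∑ i ∈ S.filter P, Ptail q i ≤ α * lam := by
    set F := ⌊(1+α)*lam⌋₊ with hF
    have hsub : S.filter P ⊆ Finset.Icc (ℓ+1) F := by
      intro i hi
      simp only [Finset.mem_filter, hS, Finset.mem_Icc, hP] at hi
      rcases hi with ⟨⟨h1, _⟩, h3⟩
      exact Finset.mem_Icc.mpr ⟨h1, Nat.le_floor h3.le⟩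
    have hcard : (S.filter P).card ≤ F - ℓ := by
      calc (S.filter P).card ≤ (Finset.Icc (ℓ+1) F).card := Finset.card_le_card hsub
        _ = F + 1 - (ℓ + 1) := Nat.card_Icc _ _
        _ = F - ℓ := by omega
    have hcardR : ((S.filter P).card : ℝ) ≤ α * lam := by
      rcases le_or_gt ℓ F with h | h
      · have hFle : (F : ℝ) ≤ (1+α)*lam := Nat.floor_le (by positivity)
        calc ((S.filter P).card : ℝ) ≤ ((F - ℓ : ℕ) : ℝ) := by exact_mod_cast hcard
          _ = (F : ℝ) - (ℓ : ℝ) := by rw [Nat.cast_sub h]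
          _ ≤ (1+α)*lam - lam := by linarith
          _ = α * lam := by ring
      · have : F - ℓ = 0 := by omega
        have : (S.filter P).card = 0 := by omega
        rw [this]
        simp
        positivity
    calc ∑ i ∈ S.filter P, Ptail q i ≤ ∑ _i ∈ S.filter P, (1:ℝ) :=
          Finset.sum_le_sum fun i _ => ptail_le_one hq i
      _ = ((S.filter P).card : ℝ) := by simp
      _ ≤ α * lam := hcardR
  have hb2 : ∑ i ∈ S.filter (fun i => ¬ P i), Ptail q i ≤ 6 / α * c := by
    set r : ℝ := Real.exp (-t) with hr_def
    have hr0 : 0 < r := Real.exp_pos _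
    have hr1 : r < 1 := by
      rw [hr_def, ← Real.exp_zero]
      exact Real.exp_lt_exp.mpr (by linarith)
    set m0 := max (ℓ+1) ⌈(1+α)*lam⌉₊ with hm0
    have hm0R : (1+α)*lam ≤ (m0 : ℝ) := by
      have h1 : (1+α)*lam ≤ (⌈(1+α)*lam⌉₊ : ℝ) := Nat.le_ceil _
      have h2 : (⌈(1+α)*lam⌉₊ : ℝ) ≤ (m0 : ℝ) := by
        exact_mod_cast Nat.le_max_right _ _
      linarith
    -- pointwise bound
    have hpt : ∀ i ∈ S.filter (fun i => ¬ P i),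
        Ptail q i ≤ c * Real.exp (t*(1+α)*lam) * r ^ i := by
      intro i hi
      have hch := ptail_le_chernoff hq i ht0.le
      rw [← hlam] at hch
      have hri : r ^ i = Real.exp (-(t * i)) := by
        rw [hr_def, ← Real.exp_nat_mul]
        congr 1; ring
      have hquad := exp_quad ht0.le ht1
      have hfac : (Real.exp t - 1) * lam - t * i
          ≤ -(α ^ 2 * lam / 3) + t*(1+α)*lam + (-(t * i)) := by
        have hkey : Real.exp t - 1 + α^2/3 - t*(1+α) ≤ 0 := by
          rw [ht_def]; nlinarith
        nlinarith [mul_nonpos_of_nonpos_of_nonneg hkey hlam0]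
      calc Ptail q i ≤ Real.exp ((Real.exp t - 1) * lam - t * i) := hch
        _ ≤ Real.exp (-(α ^ 2 * lam / 3) + t*(1+α)*lam + (-(t * i))) :=
            Real.exp_le_exp.mpr hfac
        _ = c * Real.exp (t*(1+α)*lam) * r ^ i := by
            rw [hc_def, hri, ← Real.exp_add, ← Real.exp_add]
    have hsum : ∑ i ∈ S.filter (fun i => ¬ P i), r ^ i ≤ r ^ m0 * (2/t) := by
      have hsub : S.filter (fun i => ¬ P i) ⊆ Finset.Icc m0 (m0 + n) := by
        intro i hi
        simp only [Finset.mem_filter, hS, Finset.mem_Icc, hP, not_lt] at hi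
        rcases hi with ⟨⟨h1a, h2⟩, h3⟩
        refine Finset.mem_Icc.mpr ⟨?_, by omega⟩
        exact max_le h1a (Nat.ceil_le.mpr h3)
      calc ∑ i ∈ S.filter (fun i => ¬ P i), r ^ i
          ≤ ∑ i ∈ Finset.Icc m0 (m0 + n), r ^ i :=
            Finset.sum_le_sum_of_subset_of_nonneg hsub
              (fun i _ _ => pow_nonneg hr0.le i)
        _ = ∑ j ∈ Finset.range (n+1), r ^ (m0 + j) := by
            rw [← Finset.Ico_add_one_right_eq_Icc, Finset.sum_Ico_eq_sum_range]
            have hnn : m0 + n + 1 - m0 = n + 1 := by omega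
            rw [hnn]
        _ = r ^ m0 * ∑ j ∈ Finset.range (n+1), r ^ j := by
            rw [Finset.mul_sum]
            exact Finset.sum_congr rfl fun j _ => pow_add r m0 j
        _ ≤ r ^ m0 * (1/(1-r)) := by
            apply mul_le_mul_of_nonneg_left (geomSumLe hr0.le hr1 (n+1))
              (pow_nonneg hr0.le m0)
        _ ≤ r ^ m0 * (2/t) := by
            apply mul_le_mul_of_nonneg_left _ (pow_nonneg hr0.le m0)
            have h12 := one_sub_exp_neg ht0 ht1
            rw [← hr_def] at h12
            rw [div_le_div_iff₀ (by linarith) ht0]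
            linarith
    have hexp_r : Real.exp (t*(1+α)*lam) * r ^ m0 ≤ 1 := by
      have : r ^ m0 = Real.exp (-(t * m0)) := by
        rw [hr_def, ← Real.exp_nat_mul]; congr 1; ring
      rw [this, ← Real.exp_add]
      have hmul : t * ((1+α)*lam) ≤ t * m0 := mul_le_mul_of_nonneg_left hm0R ht0.le
      calc Real.exp (t*(1+α)*lam + -(t * (m0:ℝ))) ≤ Real.exp 0 :=
            Real.exp_le_exp.mpr (by nlinarith)
        _ = 1 := Real.exp_zero
    calc ∑ i ∈ S.filter (fun i => ¬ P i), Ptail q i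
        ≤ ∑ i ∈ S.filter (fun i => ¬ P i), c * Real.exp (t*(1+α)*lam) * r ^ i :=
          Finset.sum_le_sum hpt
      _ = c * Real.exp (t*(1+α)*lam) * ∑ i ∈ S.filter (fun i => ¬ P i), r ^ i := by
          rw [Finset.mul_sum]
      _ ≤ c * Real.exp (t*(1+α)*lam) * (r ^ m0 * (2/t)) := by
          apply mul_le_mul_of_nonneg_left hsum
          positivity
      _ = c * (Real.exp (t*(1+α)*lam) * r ^ m0) * (2/t) := by ring
      _ ≤ c * 1 * (2/t) := by
          apply mul_le_mul_of_nonneg_right _ (by positivity)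
          exact mul_le_mul_of_nonneg_left hexp_r hc0.le
      _ = c * (3/α) := by rw [ht_def]; field_simp
      _ ≤ 6 / α * c := by
          rw [mul_comm]
          apply mul_le_mul_of_nonneg_right _ hc0.le
          apply div_le_div_of_nonneg_right (by norm_num) hα0.le
  linarith
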